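/- arXiv:2312.07164 — 5 statements merged into one kernel-verified Lean document; each statement's English description precedes it below -/
import Mathlib

section
/- If 0 < s < 1 and s = e^{-2(1+s)/(α+2)} for some α ≥ 2, then s ≤ e^{-2/(α+2)} and s ≥ (α+4)/((α+2)e^{4/(α+2)} + 2). -/
theorem stmt_1 (α s : ℝ) (hα : 2 ≤ α) (hs : s ∈ Set.Ioo (0 : ℝ) 1)
    (hfix : s = Real.exp (-2 * (1 + s) / (α + 2))) :
    s ≤ Real.exp (-2 / (α + 2)) ∧
    (α + 4) / ((α + 2) * Real.exp (4 / (α + 2)) + 2) ≤ s := by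
  obtain ⟨hs0, hs1⟩ := hs
  have hA : (0:ℝ) < α + 2 := by linarith
  have hE : 0 < Real.exp (4 / (α + 2)) := Real.exp_pos _
  constructor
  · rw [hfix]
    apply Real.exp_le_exp.mpr
    rw [div_le_div_iff₀ hA hA]
    nlinarith
  · -- tangent line bound: exp y ≥ exp y₀ (1 + y - y₀) with y₀ = -4/(α+2)
    have key : Real.exp (-(4 / (α + 2))) * (2 * (1 - s) / (α + 2) + 1)
        ≤ Real.exp (-2 * (1 + s) / (α + 2)) := by
      rw [show -2 * (1 + s) / (α + 2) = -(4 / (α + 2)) + 2 * (1 - s) / (α + 2) by ring,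
        Real.exp_add]
      exact mul_le_mul_of_nonneg_left (Real.add_one_le_exp _) (Real.exp_pos _).le
    rw [Real.exp_neg] at key
    have key2 : (2 * (1 - s) / (α + 2) + 1) ≤ s * Real.exp (4 / (α + 2)) := by
      rw [← hfix] at key
      calc (2 * (1 - s) / (α + 2) + 1)
          = (Real.exp (4 / (α + 2)))⁻¹ * (2 * (1 - s) / (α + 2) + 1)
            * Real.exp (4 / (α + 2)) := by field_simp
        _ ≤ s * Real.exp (4 / (α + 2)) := by
            exact mul_le_mul_of_nonneg_right key hE.le
    have key3 : 2 * (1 - s) + (α + 2) ≤ s * Real.exp (4 / (α + 2)) * (α + 2) := by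
      have := mul_le_mul_of_nonneg_right key2 hA.le
      field_simp at this
      linarith [this]
    have hden : 0 < (α + 2) * Real.exp (4 / (α + 2)) + 2 := by positivity
    rw [div_le_iff₀ hden]
    nlinarith [key3]
end

section
/- For a > 0 and x > 0, the equation a·x·ln x = x + 1 is equivalent to x = 1/(a·W((1/a)·e^{-1/a})), where W is the Lambert W function (the inverse of t ↦ t·e^t on the positive reals). -/
theorem stmt_3 (W : ℝ → ℝ)
    (hW : ∀ t > 0, W (t * Real.exp t) = t)
    (hW' : ∀ y > 0, 0 < W y ∧ W y * Real.exp (W y) = y)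
    (a x : ℝ) (ha : 0 < a) (hx : 0 < x) :
    a * x * Real.log x = x + 1 ↔
      x = 1 / (a * W ((1 / a) * Real.exp (-(1 / a)))) := by
  have hax : 0 < a * x := mul_pos ha hx
  set y : ℝ := (1 / a) * Real.exp (-(1 / a)) with hy
  have hy0 : 0 < y := by positivity
  obtain ⟨hWy, hWeq⟩ := hW' y hy0
  -- key equivalence
  have key : a * x * Real.log x = x + 1 ↔
      (1 / (a * x)) * Real.exp (1 / (a * x)) = y := by
    have e1 : (1 / (a * x)) * Real.exp (1 / (a * x)) =
        Real.exp (1 / (a * x) - Real.log (a * x)) := by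
      rw [Real.exp_sub, Real.exp_log hax]; ring
    have e2 : y = Real.exp (-(1 / a) - Real.log a) := by
      rw [Real.exp_sub, Real.exp_log ha]; rw [hy]; ring
    rw [e1, e2, Real.exp_eq_exp, Real.log_mul ha.ne' hx.ne']
    constructor
    · intro h
      have hlog : Real.log x = (x + 1) / (a * x) := by
        field_simp
        linarith
      rw [hlog]
      field_simp
      ring
    · intro h
      have : 1 / (a * x) - Real.log x = -(1 / a) := by linarith
      field_simp at this
      nlinarith [this]
  rw [key]
  constructor
  · intro h
    have h2 := hW (1 / (a * x)) (by positivity)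
    rw [h] at h2
    rw [h2]
    field_simp
  · intro h
    have hxt : 1 / (a * x) = W y := by
      rw [h]
      field_simp
    rw [hxt, hWeq]
end

section
/- For every x ∈ (0, 1/2], one has 0 < 1/W(x·e^{-x}) - 2 - 1/x ≤ (4/3)·x², where W is the Lambert W function on the positive reals. -/
set_option maxHeartbeats 2000000 in
theorem stmt_4 (W : ℝ → ℝ)
    (hW : ∀ t > 0, W (t * Real.exp t) = t)
    (hW' : ∀ y > 0, 0 < W y ∧ W y * Real.exp (W y) = y)
    (x : ℝ) (hx : x ∈ Set.Ioc (0 : ℝ) (1 / 2)) :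
    0 < 1 / W (x * Real.exp (-x)) - 2 - 1 / x ∧
    1 / W (x * Real.exp (-x)) - 2 - 1 / x ≤ (4 / 3) * x ^ 2 := by
  obtain ⟨hx0, hx2⟩ := hx
  have hy : (0:ℝ) < x * Real.exp (-x) := mul_pos hx0 (Real.exp_pos _)
  obtain ⟨hw0, hwe⟩ := hW' _ hy
  set w := W (x * Real.exp (-x)) with hwdef
  -- strict monotonicity of t * exp t on positives
  have mono : ∀ s t : ℝ, 0 < s → s < t → s * Real.exp s < t * Real.exp t := by
    intro s t hs hst
    exact mul_lt_mul'' hst (Real.exp_lt_exp.2 hst) hs.le (Real.exp_pos _).le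
  -- UPPER bound on w : w < x / (1 + 2x)
  have h12 : (0:ℝ) < 1 + 2 * x := by linarith
  set b : ℝ := x / (1 + 2 * x) with hbdef
  have hb0 : 0 < b := div_pos hx0 h12
  have hkey1 : x * Real.exp (-x) < b * Real.exp b := by
    have hz0 : 0 ≤ x + b := by positivity
    have hexp : 1 + (x + b) + (x + b) ^ 2 / 2 ≤ Real.exp (x + b) := by
      have := Real.sum_le_exp_of_nonneg hz0 3
      simp [Finset.sum_range_succ, Nat.factorial] at this
      nlinarith [this]
    have hid : 1 + (x + b) + (x + b) ^ 2 / 2 - (1 + 2 * x)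
        = 2 * x ^ 4 / (1 + 2 * x) ^ 2 := by
      rw [hbdef]; field_simp; ring
    have hgt : (1 + 2 * x) < Real.exp (x + b) := by
      have hq : 0 < 2 * x ^ 4 / (1 + 2 * x) ^ 2 := by positivity
      nlinarith [hexp, hid]
    -- from exp(x+b) > 1+2x derive x e^{-x} < b e^b
    have : x * Real.exp (-x) * (1 + 2 * x) < x * Real.exp b := by
      have h1 : Real.exp (-x) * (1 + 2 * x) < Real.exp b := by
        have : (1 + 2 * x) < Real.exp (x + b) := hgt
        rw [Real.exp_add] at this
        calc Real.exp (-x) * (1 + 2 * x)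
            < Real.exp (-x) * (Real.exp x * Real.exp b) := by
              exact (mul_lt_mul_iff_right₀ (Real.exp_pos _)).2 this
          _ = Real.exp b := by rw [← Real.exp_add, ← Real.exp_add]; ring_nf
      calc x * Real.exp (-x) * (1 + 2 * x) = x * (Real.exp (-x) * (1 + 2 * x)) := by ring
        _ < x * Real.exp b := (mul_lt_mul_iff_right₀ hx0).2 h1
    have hb_eq : b * Real.exp b = x * Real.exp b / (1 + 2 * x) := by
      rw [hbdef]; ring
    rw [hb_eq, lt_div_iff₀ h12]
    linarith
  have hwb : w < b := by
    by_contra h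
    push_neg at h
    have hle : b * Real.exp b ≤ w * Real.exp w := by
      rcases eq_or_lt_of_le h with h' | h'
      · rw [h']
      · exact (mono b w hb0 h').le
    rw [hwe] at hle
    linarith
  -- LOWER bound on w : a ≤ w with a = x / D, D = 1 + 2x + (4/3)x^3
  set D : ℝ := 1 + 2 * x + (4/3) * x ^ 3 with hDdef
  have hD1 : (1:ℝ) ≤ D := by rw [hDdef]; nlinarith [pow_nonneg hx0.le 3]
  have hD0 : (0:ℝ) < D := by linarith
  set a : ℝ := x / D with hadef
  have ha0 : 0 < a := div_pos hx0 hD0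
  -- key exp inequality : exp (x + a) ≤ D
  have hkey2 : Real.exp (x + a) ≤ D := by
    set z : ℝ := x + a with hzdef
    have hz0 : 0 ≤ z := by positivity
    have haz : a ≤ x := by
      rw [hadef]; exact div_le_self hx0.le hD1
    have hz1 : z ≤ 1 := by rw [hzdef]; linarith
    have hbound := Real.exp_bound' hz0 hz1 (n := 6) (by norm_num)
    have hza : z = x * (D + 1) / D := by
      rw [hzdef, hadef]; field_simp
    have hpoly : (0:ℝ) ≤ 8/3*x^4 + 416/15*x^5 + 15574/135*x^6 + 11732/45*x^7
            + 19004/45*x^8 + 3212/5*x^9 + 109634/135*x^10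
            + 108484/135*x^11 + 39062/45*x^12 + 32024/45*x^13
            + 191752/405*x^14 + 362432/729*x^15 + 2680/27*x^16
            + 19072/81*x^17 - 2336/243*x^18 + 44224/729*x^19
            - 2272/405*x^20 + 66176/10935*x^21 - 128/405*x^22
            - 512/10935*x^23 - 896/98415*x^24 := by
      have p4 : 0 ≤ x ^ 4 := by positivity
      have p5 : 0 ≤ x ^ 5 := by positivity
      have p6 : 0 ≤ x ^ 6 := by positivity
      have p7 : 0 ≤ x ^ 7 := by positivity
      have p8 : 0 ≤ x ^ 8 := by positivity
      have p9 : 0 ≤ x ^ 9 := by positivity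
      have p10 : 0 ≤ x ^ 10 := by positivity
      have p11 : 0 ≤ x ^ 11 := by positivity
      have p12 : 0 ≤ x ^ 12 := by positivity
      have p13 : 0 ≤ x ^ 13 := by positivity
      have p14 : 0 ≤ x ^ 14 := by positivity
      have p15 : 0 ≤ x ^ 15 := by positivity
      have p16 : 0 ≤ x ^ 16 := by positivity
      have p17 : 0 ≤ x ^ 17 := by positivity
      have p19 : 0 ≤ x ^ 19 := by positivity
      have p21 : 0 ≤ x ^ 21 := by positivity
      have hxk : ∀ k : ℕ, x ^ (17 + k) ≤ x ^ 17 * (1/2) ^ k := by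
        intro k
        have h1 : x ^ (17 + k) = x ^ 17 * x ^ k := by ring
        rw [h1]
        exact mul_le_mul_of_nonneg_left (pow_le_pow_left₀ hx0.le hx2 k) p17
      have e18 := hxk 1
      have e20 := hxk 3
      have e22 := hxk 5
      have e23 := hxk 6
      have e24 := hxk 7
      norm_num at e18 e20 e22 e23 e24
      nlinarith [e18, e20, e22, e23, e24]
    have hexpand : D - (1 + z + z^2/2 + z^3/6 + z^4/24 + z^5/120 + z^6*7/4320)
        = (8/3*x^4 + 416/15*x^5 + 15574/135*x^6 + 11732/45*x^7
            + 19004/45*x^8 + 3212/5*x^9 + 109634/135*x^10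
            + 108484/135*x^11 + 39062/45*x^12 + 32024/45*x^13
            + 191752/405*x^14 + 362432/729*x^15 + 2680/27*x^16
            + 19072/81*x^17 - 2336/243*x^18 + 44224/729*x^19
            - 2272/405*x^20 + 66176/10935*x^21 - 128/405*x^22
            - 512/10935*x^23 - 896/98415*x^24) / D ^ 6 := by
      rw [hza, hDdef]
      have hDne : D ≠ 0 := ne_of_gt hD0
      rw [hDdef] at hDne
      field_simp
      ring
    have hsum2 : 1 + z + z^2/2 + z^3/6 + z^4/24 + z^5/120 + z^6*7/4320 ≤ D := by
      have hq : 0 ≤ (8/3*x^4 + 416/15*x^5 + 15574/135*x^6 + 11732/45*x^7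
            + 19004/45*x^8 + 3212/5*x^9 + 109634/135*x^10
            + 108484/135*x^11 + 39062/45*x^12 + 32024/45*x^13
            + 191752/405*x^14 + 362432/729*x^15 + 2680/27*x^16
            + 19072/81*x^17 - 2336/243*x^18 + 44224/729*x^19
            - 2272/405*x^20 + 66176/10935*x^21 - 128/405*x^22
            - 512/10935*x^23 - 896/98415*x^24) / D ^ 6 :=
        div_nonneg hpoly (pow_nonneg hD0.le 6)
      linarith [hexpand, hq]
    calc Real.exp z ≤ _ := hbound
      _ = 1 + z + z^2/2 + z^3/6 + z^4/24 + z^5/120 + z^6*7/4320 := by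
          rw [Finset.sum_range_succ, Finset.sum_range_succ, Finset.sum_range_succ,
            Finset.sum_range_succ, Finset.sum_range_succ, Finset.sum_range_succ,
            Finset.sum_range_zero]
          norm_num [Nat.factorial]
      _ ≤ D := hsum2
  have hkey2' : a * Real.exp a ≤ x * Real.exp (-x) := by
    have h1 : Real.exp a ≤ D * Real.exp (-x) := by
      have := hkey2
      rw [Real.exp_add] at this
      have h2 : Real.exp x * Real.exp a * Real.exp (-x) ≤ D * Real.exp (-x) :=
        mul_le_mul_of_nonneg_right this (Real.exp_pos _).le
      calc Real.exp a = Real.exp x * Real.exp a * Real.exp (-x) := by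
            rw [mul_comm (Real.exp x), mul_assoc, ← Real.exp_add]; simp
        _ ≤ D * Real.exp (-x) := h2
    have ha_eq : a * Real.exp a = x * Real.exp a / D := by rw [hadef]; ring
    rw [ha_eq, div_le_iff₀ hD0]
    calc x * Real.exp a ≤ x * (D * Real.exp (-x)) := (mul_le_mul_iff_right₀ hx0).2 h1
      _ = x * Real.exp (-x) * D := by ring
  have hwa : a ≤ w := by
    by_contra h
    push_neg at h
    have := mono w a hw0 h
    rw [hwe] at this
    linarith [hkey2']
  -- conclude
  constructor
  · have h1 : 1 / b < 1 / w := one_div_lt_one_div_of_lt hw0 hwb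
    have hbinv : 1 / b = 1 / x + 2 := by
      rw [hbdef]; field_simp
    rw [hbinv] at h1
    linarith
  · have h2 : 1 / w ≤ 1 / a := one_div_le_one_div_of_le ha0 hwa
    have hainv : 1 / a = 1 / x + 2 + (4/3) * x ^ 2 := by
      rw [hadef, hDdef]; field_simp
    rw [hainv] at h2
    linarith
end

section
/- Define α₁ = 2 and α_{j+1} = 2 + 2/W((2/(α_j+2))·e^{-2/(α_j+2)}) for j ≥ 1, where W is the Lambert W function. Then for all i ≥ 2 one has 8i - 6 < α_i < 8i - 5; in particular α_i is not a natural number for i ≥ 2. -/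
lemma my_mono {a b : ℝ} (ha : 0 < a) (hb : 0 < b)
    (h : a * Real.exp a ≤ b * Real.exp b) : a ≤ b := by
  by_contra hlt
  push_neg at hlt
  have h2 : b * Real.exp b < a * Real.exp a :=
    mul_lt_mul'' hlt (Real.exp_lt_exp.2 hlt) hb.le (Real.exp_pos b).le
  linarith

lemma my_mono_lt {a b : ℝ} (ha : 0 < a) (hb : 0 < b)
    (h : a * Real.exp a < b * Real.exp b) : a < b := by
  by_contra hle
  push_neg at hle
  have h2 : b * Real.exp b ≤ a * Real.exp a :=
    mul_le_mul hle (Real.exp_le_exp.2 hle) (Real.exp_pos b).le ha.le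
  linarith

lemma my_exp_cubic {x : ℝ} (h0 : 0 ≤ x) (h1 : x ≤ 1) :
    Real.exp x ≤ 1 + x + x ^ 2 / 2 + 2 / 9 * x ^ 3 := by
  have h := Real.exp_bound' h0 h1 (n := 3) (by norm_num)
  simp [Finset.sum_range_succ, Nat.factorial] at h
  nlinarith [h]

-- lower step: 2/t + 4 < 2/s
lemma my_low {t s : ℝ} (ht : 0 < t) (hs : 0 < s)
    (h : s * Real.exp s = t * Real.exp (-t)) : 2 / t + 4 < 2 / s := by
  set σ : ℝ := t / (1 + 2 * t) with hσdef
  have hd : (0:ℝ) < 1 + 2 * t := by linarith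
  have hσ : 0 < σ := div_pos ht hd
  have hz : 0 ≤ σ + t := by positivity
  have hq := Real.quadratic_le_exp_of_nonneg hz
  -- σ * exp (σ + t) > t
  have key : t < σ * Real.exp (σ + t) := by
    have h1 : σ * (1 + (σ + t) + (σ + t) ^ 2 / 2) > t := by
      rw [hσdef]
      rw [gt_iff_lt, ← sub_pos]
      have expand : t / (1 + 2*t) * (1 + (t / (1 + 2*t) + t) + (t / (1 + 2*t) + t) ^ 2 / 2) - t
          = t * (4 * t ^ 2 * t ^ 2) / (2 * (1 + 2*t) ^ 3) := by
        field_simp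
        ring
      rw [expand]
      positivity
    calc t < σ * (1 + (σ + t) + (σ + t) ^ 2 / 2) := h1
      _ ≤ σ * Real.exp (σ + t) := by
          apply mul_le_mul_of_nonneg_left hq hσ.le
  have key2 : t * Real.exp (-t) < σ * Real.exp σ := by
    have : Real.exp (σ + t) = Real.exp σ * Real.exp t := Real.exp_add σ t
    rw [this] at key
    have het : 0 < Real.exp t := Real.exp_pos t
    have h5 : t < σ * Real.exp σ * Real.exp t := by linarith [key]
    rw [Real.exp_neg, ← div_eq_mul_inv]
    exact (div_lt_iff₀ het).2 h5
  rw [← h] at key2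
  have hslt : s < σ := my_mono_lt hs hσ key2
  have h2σ : 2 / σ = 2 / t + 4 := by
    rw [hσdef]; field_simp; ring
  rw [← h2σ]
  exact div_lt_div_of_pos_left (by norm_num) hs hslt

-- polynomial fact Q : σ + t ≤ u
lemma my_polyQ {t : ℝ} (ht : 0 < t) (h6 : t ≤ 1/6) :
    t / (1 + 2*t + 3*t^3) + t ≤ 2*t - 2*t^2 + 4*t^3 - 7*t^4 := by
  have hD : (0:ℝ) < 1 + 2*t + 3*t^3 := by positivity
  rw [div_add' _ _ _ hD.ne', div_le_iff₀ hD]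
  nlinarith [mul_nonneg (pow_pos ht 4).le (by linarith : (0:ℝ) ≤ 4 - 20*t),
    mul_nonneg (pow_pos ht 6).le (by linarith : (0:ℝ) ≤ 12 - 21*t)]

lemma my_polyP {t : ℝ} (ht : 0 < t) (h6 : t ≤ 1/6) :
    1 + (2*t - 2*t^2 + 4*t^3 - 7*t^4) + (2*t - 2*t^2 + 4*t^3 - 7*t^4)^2/2
      + 2/9*(2*t - 2*t^2 + 4*t^3 - 7*t^4)^3 ≤ 1 + 2*t + 3*t^3 := by
  nlinarith [pow_pos ht 3, pow_pos ht 5, pow_pos ht 7, pow_pos ht 4, pow_pos ht 6,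
    pow_pos ht 8, pow_pos ht 9, pow_pos ht 10, pow_pos ht 11, pow_pos ht 12,
    mul_nonneg (pow_pos ht 3).le (by linarith : (0:ℝ) ≤ 1 - 6*t),
    mul_nonneg (pow_pos ht 5).le (by linarith : (0:ℝ) ≤ 1 - 6*t),
    mul_nonneg (pow_pos ht 7).le (by linarith : (0:ℝ) ≤ 1 - 6*t),
    mul_nonneg (pow_pos ht 9).le (by linarith : (0:ℝ) ≤ 1 - 6*t),
    mul_nonneg (pow_pos ht 10).le (by linarith : (0:ℝ) ≤ 1 - 6*t)]

-- upper step
lemma my_high {t s : ℝ} (ht : 0 < t) (h6 : t ≤ 1/6) (hs : 0 < s)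
    (h : s * Real.exp s = t * Real.exp (-t)) : 2 / s ≤ 2 / t + 4 + 6 * t ^ 2 := by
  set D : ℝ := 1 + 2*t + 3*t^3 with hDdef
  have hD : (0:ℝ) < D := by positivity
  set σ : ℝ := t / D with hσdef
  have hσ : 0 < σ := div_pos ht hD
  set u : ℝ := 2*t - 2*t^2 + 4*t^3 - 7*t^4 with hudef
  have hzu : σ + t ≤ u := my_polyQ ht h6
  have hz0 : 0 ≤ σ + t := by positivity
  have hu1 : u ≤ 1 := by nlinarith
  have hu0 : 0 ≤ u := le_trans hz0 hzu
  have hexp : Real.exp (σ + t) ≤ D := by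
    calc Real.exp (σ + t) ≤ Real.exp u := Real.exp_le_exp.2 hzu
      _ ≤ 1 + u + u ^ 2 / 2 + 2/9 * u ^ 3 := my_exp_cubic hu0 hu1
      _ ≤ D := by rw [hudef, hDdef]; exact my_polyP ht h6
  -- σ * exp σ ≤ t * exp (-t)
  have key : σ * Real.exp σ ≤ t * Real.exp (-t) := by
    have h1 : σ * Real.exp (σ + t) ≤ σ * D := mul_le_mul_of_nonneg_left hexp hσ.le
    have h2 : σ * D = t := by rw [hσdef]; field_simp
    rw [Real.exp_add] at h1
    have het : 0 < Real.exp t := Real.exp_pos t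
    have h3 : σ * Real.exp σ * Real.exp t ≤ t := by linarith [h1, h2]
    rw [Real.exp_neg, ← div_eq_mul_inv, le_div_iff₀ het]
    exact h3
  rw [← h] at key
  have hle : σ ≤ s := my_mono hσ hs key
  have h2σ : 2 / σ = 2 / t + 4 + 6 * t ^ 2 := by
    rw [hσdef, hDdef]; field_simp; ring
  rw [← h2σ]
  exact div_le_div_of_nonneg_left (by norm_num) hσ hle
-- base-case upper bound: t = 1/2
lemma my_base {s : ℝ} (hs : 0 < s)
    (h : s * Real.exp s = (2:ℝ)/(2+2) * Real.exp (-((2:ℝ)/(2+2)))) : 2 / s ≤ 17 / 2 := by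
  have h' : s * Real.exp s = (1/2 : ℝ) * Real.exp (-(1/2 : ℝ)) := by norm_num at h ⊢; exact h
  have hx : Real.exp (25/34 : ℝ) ≤ 17/8 := by
    have := my_exp_cubic (x := 25/34) (by norm_num) (by norm_num)
    nlinarith [this]
  have key : (4/17 : ℝ) * Real.exp (4/17) ≤ (1/2 : ℝ) * Real.exp (-(1/2)) := by
    have he : Real.exp (4/17 : ℝ) * Real.exp (1/2 : ℝ) = Real.exp (25/34 : ℝ) := by
      rw [← Real.exp_add]; norm_num
    have hp : (0:ℝ) < Real.exp (1/2) := Real.exp_pos _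
    rw [Real.exp_neg, ← div_eq_mul_inv, le_div_iff₀ hp]
    calc (4/17 : ℝ) * Real.exp (4/17) * Real.exp (1/2)
        = (4/17) * Real.exp (25/34) := by rw [mul_assoc, he]
      _ ≤ (4/17) * (17/8) := by nlinarith [hx]
      _ = 1/2 := by norm_num
  rw [← h'] at key
  have hle : (4/17 : ℝ) ≤ s := my_mono (by norm_num) hs key
  calc 2 / s ≤ 2 / (4/17 : ℝ) := div_le_div_of_nonneg_left (by norm_num) (by norm_num) hle
    _ = 17/2 := by norm_num

theorem stmt_6 (W : ℝ → ℝ)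
    (hW : ∀ t > 0, W (t * Real.exp t) = t)
    (hW' : ∀ y > 0, 0 < W y ∧ W y * Real.exp (W y) = y)
    (α : ℕ → ℝ) (hα1 : α 1 = 2)
    (hrec : ∀ j ≥ 1, α (j + 1) =
      2 + 2 / W ((2 / (α j + 2)) * Real.exp (-(2 / (α j + 2))))) :
    ∀ i : ℕ, 2 ≤ i → (8 * (i : ℝ) - 6 < α i ∧ α i < 8 * (i : ℝ) - 5) ∧
      ∀ n : ℕ, α i ≠ (n : ℝ) := by
  have step : ∀ j : ℕ, 1 ≤ j → 0 < α j + 2 →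
      α j + 8 < α (j+1) ∧
      (2/(α j + 2) ≤ 1/6 → α (j+1) ≤ α j + 8 + 24/(α j + 2)^2) := by
    intro j hj hpos
    have ht : 0 < 2/(α j + 2) := by positivity
    have hy : 0 < (2/(α j + 2)) * Real.exp (-(2/(α j + 2))) := by positivity
    obtain ⟨hs, hse⟩ := hW' _ hy
    have hα : α (j+1) = 2 + 2 / W ((2/(α j + 2)) * Real.exp (-(2/(α j + 2)))) := hrec j hj
    have h2t : 2/(2/(α j + 2)) = α j + 2 := by field_simp
    constructor
    · have hlow := my_low ht hs hse
      rw [h2t] at hlow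
      rw [hα]; linarith
    · intro h6
      have hhigh := my_high ht h6 hs hse
      rw [h2t] at hhigh
      have ht2 : 6 * (2/(α j + 2))^2 = 24/(α j + 2)^2 := by
        field_simp; ring
      rw [ht2] at hhigh
      rw [hα]; linarith
  have main : ∀ i : ℕ, 2 ≤ i → 8*(i:ℝ) - 6 < α i ∧ α i ≤ 8*(i:ℝ) - 5 - 1/(i:ℝ) := by
    intro i hi
    induction i, hi using Nat.le_induction with
    | base =>
      have hα2 : α 2 = 2 + 2 / W ((2:ℝ)/(2+2) * Real.exp (-((2:ℝ)/(2+2)))) := by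
        have h := hrec 1 le_rfl; rw [hα1] at h; exact h
      have hy : (0:ℝ) < (2:ℝ)/(2+2) * Real.exp (-((2:ℝ)/(2+2))) := by positivity
      obtain ⟨hs, hse⟩ := hW' _ hy
      have hlow := my_low (t := (2:ℝ)/(2+2)) (by norm_num) hs hse
      have h8 : (2:ℝ)/((2:ℝ)/(2+2)) + 4 = 8 := by norm_num
      rw [h8] at hlow
      have hup := my_base hs hse
      constructor
      · rw [hα2]; push_cast; linarith
      · rw [hα2]; push_cast; linarith
    | succ i hi ih =>
      obtain ⟨l, u⟩ := ih
      have hi2 : (2:ℝ) ≤ (i:ℝ) := by exact_mod_cast hi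
      have hl10 : (10:ℝ) ≤ α i := by linarith
      have hpos : 0 < α i + 2 := by linarith
      have h6 : 2/(α i + 2) ≤ 1/6 := by
        rw [div_le_div_iff₀ hpos (by norm_num)]; linarith
      obtain ⟨s1, s2⟩ := step i (by omega) hpos
      have s2' := s2 h6
      have hb : (0:ℝ) < 8*(i:ℝ) - 4 := by linarith
      have hmono : 24/(α i + 2)^2 ≤ 24/(8*(i:ℝ)-4)^2 := by
        apply div_le_div_of_nonneg_left (by norm_num) (by positivity)
        nlinarith
      have harith : 24/(8*(i:ℝ)-4)^2 ≤ 1/(i:ℝ) - 1/((i:ℝ)+1) := by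
        have h1 : (1:ℝ)/(i:ℝ) - 1/((i:ℝ)+1) = 1/((i:ℝ)*((i:ℝ)+1)) := by
          field_simp
          ring
        rw [h1, div_le_div_iff₀ (by positivity) (by positivity)]
        nlinarith
      constructor
      · push_cast; linarith
      · push_cast; linarith
  intro i hi
  obtain ⟨hl, hu⟩ := main i hi
  have hi2 : (2:ℝ) ≤ (i:ℝ) := by exact_mod_cast hi
  have hub : α i < 8*(i:ℝ) - 5 := by
    have : (0:ℝ) < 1/(i:ℝ) := by positivity
    linarith
  refine ⟨⟨hl, hub⟩, ?_⟩
  intro n hn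
  have h1 : ((8*(i:ℤ) - 6 : ℤ) : ℝ) < ((n:ℤ) : ℝ) := by push_cast; rw [← hn]; linarith
  have h2 : ((n:ℤ) : ℝ) < ((8*(i:ℤ) - 5 : ℤ) : ℝ) := by push_cast; rw [← hn]; linarith
  have h1' := Int.cast_lt.mp h1
  have h2' := Int.cast_lt.mp h2
  omega
end

section
/- If a sequence (α_i) satisfies α₁ = 2 and α_i + 8 < α_{i+1} ≤ α_i + 8 + (32/3)/(α_i + 2)² for all i ≥ 1, then 8i - 6 < α_i ≤ 8i - 6 + (32/3)·∑_{j=1}^{i-1} 1/(8j - 4)² for all i ≥ 2, and moreover (32/3)·∑_{j=1}^{∞} 1/(8j-4)² = π²/12 < 1, so that 8i - 6 < α_i < 8i - 5 for all i ≥ 2. -/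
open Real

lemma aux_summable_odd : Summable (fun k : ℕ => 1 / (2 * (k : ℝ) + 1) ^ 2) := by
  have h : Summable (fun k : ℕ => 1 / ((k : ℝ) + 1) ^ 2) := by
    have := (summable_nat_add_iff (f := fun n : ℕ => (1 : ℝ) / (n : ℝ) ^ 2) 1).2
      (Real.summable_one_div_nat_pow.2 one_lt_two)
    simpa using this
  refine h.of_nonneg_of_le (fun k => by positivity) (fun k => ?_)
  have : ((k:ℝ) + 1)^2 ≤ (2 * k + 1)^2 := by nlinarith [Nat.cast_nonneg (α := ℝ) k]
  exact one_div_le_one_div_of_le (by positivity) this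

lemma aux_hasSum_odd : HasSum (fun k : ℕ => 1 / (2 * (k : ℝ) + 1) ^ 2) (Real.pi ^ 2 / 8) := by
  have hS : HasSum (fun n : ℕ => (1 : ℝ) / (n : ℝ) ^ 2) (Real.pi ^ 2 / 6) := hasSum_zeta_two
  have heven : HasSum (fun k : ℕ => (1 : ℝ) / ((2 * k : ℕ) : ℝ) ^ 2) (Real.pi ^ 2 / 6 / 4) :=
    (hS.div_const 4).congr_fun fun k => by
      rcases Nat.eq_zero_or_pos k with rfl | hk
      · norm_num
      · have : ((k:ℝ)) ≠ 0 := Nat.cast_ne_zero.2 hk.ne'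
        push_cast
        rw [mul_pow, div_div]
        norm_num
        rw [mul_comm]
  have hodd := aux_summable_odd.hasSum
  have hcomb : HasSum (fun n : ℕ => (1 : ℝ) / (n : ℝ) ^ 2)
      (Real.pi ^ 2 / 6 / 4 + ∑' k : ℕ, 1 / (2 * (k : ℝ) + 1) ^ 2) :=
    HasSum.even_add_odd (f := fun n : ℕ => (1 : ℝ) / (n : ℝ) ^ 2) heven
      (hodd.congr_fun fun k => by push_cast; ring_nf)
  have h2 := hS.unique hcomb
  have ht : (∑' k : ℕ, 1 / (2 * (k : ℝ) + 1) ^ 2) = Real.pi ^ 2 / 8 := by linarith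
  rwa [ht] at hodd

lemma aux_hasSum84 : HasSum (fun j : ℕ => 1 / (8 * (j : ℝ) + 4) ^ 2) (Real.pi ^ 2 / 128) := by
  have h := aux_hasSum_odd.div_const 16
  have hv : Real.pi ^ 2 / 8 / 16 = Real.pi ^ 2 / 128 := by ring
  rw [hv] at h
  refine h.congr_fun fun j => ?_
  have h1 : (8 * (j:ℝ) + 4) ^ 2 = (2 * (j:ℝ) + 1) ^ 2 * 16 := by ring
  rw [div_div, h1]

theorem stmt_7 (α : ℕ → ℝ) (hα1 : α 1 = 2)
    (hrec : ∀ i ≥ 1, α i + 8 < α (i + 1) ∧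
        α (i + 1) ≤ α i + 8 + (32 / 3) / (α i + 2) ^ 2) :
    (∀ i : ℕ, 2 ≤ i → 8 * (i : ℝ) - 6 < α i ∧
        α i ≤ 8 * (i : ℝ) - 6 +
          (32 / 3) * ∑ j ∈ Finset.range (i - 1), 1 / (8 * (j : ℝ) + 4) ^ 2) ∧
    (32 / 3) * (∑' j : ℕ, 1 / (8 * (j : ℝ) + 4) ^ 2) = Real.pi ^ 2 / 12 ∧
    Real.pi ^ 2 / 12 < 1 ∧
    (∀ i : ℕ, 2 ≤ i → 8 * (i : ℝ) - 6 < α i ∧ α i < 8 * (i : ℝ) - 5) := by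
  have hmain : ∀ i : ℕ, 2 ≤ i → 8 * (i : ℝ) - 6 < α i ∧
      α i ≤ 8 * (i : ℝ) - 6 +
        (32 / 3) * ∑ j ∈ Finset.range (i - 1), 1 / (8 * (j : ℝ) + 4) ^ 2 := by
    intro i hi
    induction i, hi using Nat.le_induction with
    | base =>
      obtain ⟨h1, h2⟩ := hrec 1 le_rfl
      rw [hα1] at h1 h2
      norm_num [Finset.sum_range_one]
      constructor
      · linarith
      · nlinarith
    | succ n hn ih =>
      obtain ⟨ih1, ih2⟩ := ih
      obtain ⟨h1, h2⟩ := hrec n (by omega)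
      have hb : (0:ℝ) < 8 * (n:ℝ) - 4 := by
        have : (2:ℝ) ≤ (n:ℝ) := by exact_mod_cast hn
        linarith
      have ha : 8 * (n:ℝ) - 4 < α n + 2 := by linarith
      have hsq : (8 * (n:ℝ) - 4) ^ 2 < (α n + 2) ^ 2 := by nlinarith
      have hdiv : (32 / 3) / (α n + 2) ^ 2 < (32 / 3) / (8 * (n:ℝ) - 4) ^ 2 := by
        apply div_lt_div_of_pos_left (by norm_num) (by positivity) hsq
      constructor
      · push_cast; linarith
      · have hsum : ∑ j ∈ Finset.range (n + 1 - 1), 1 / (8 * (j : ℝ) + 4) ^ 2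
            = (∑ j ∈ Finset.range (n - 1), 1 / (8 * (j : ℝ) + 4) ^ 2)
              + 1 / (8 * ((n - 1 : ℕ) : ℝ) + 4) ^ 2 := by
          have h3 : n + 1 - 1 = (n - 1) + 1 := by omega
          rw [h3, Finset.sum_range_succ]
        have hc : ((n - 1 : ℕ) : ℝ) = (n:ℝ) - 1 := by
          have : (1:ℕ) ≤ n := by omega
          push_cast [this]; ring
        have h4 : 8 * ((n - 1 : ℕ) : ℝ) + 4 = 8 * (n:ℝ) - 4 := by rw [hc]; ring
        rw [hsum, h4]
        have : (32 / 3) / (8 * (n:ℝ) - 4) ^ 2 = (32/3) * (1 / (8 * (n:ℝ) - 4) ^ 2) := by ring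
        push_cast
        nlinarith [hdiv]
  have hts : (∑' j : ℕ, 1 / (8 * (j : ℝ) + 4) ^ 2) = Real.pi ^ 2 / 128 :=
    aux_hasSum84.tsum_eq
  have htsval : (32 / 3) * (∑' j : ℕ, 1 / (8 * (j : ℝ) + 4) ^ 2) = Real.pi ^ 2 / 12 := by
    rw [hts]; ring
  have hpi : Real.pi ^ 2 / 12 < 1 := by
    nlinarith [Real.pi_lt_d2, Real.pi_gt_three]
  refine ⟨hmain, htsval, hpi, fun i hi => ?_⟩
  obtain ⟨h1, h2⟩ := hmain i hi
  refine ⟨h1, ?_⟩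
  have hle : ∑ j ∈ Finset.range (i - 1), 1 / (8 * (j : ℝ) + 4) ^ 2
      ≤ ∑' j : ℕ, 1 / (8 * (j : ℝ) + 4) ^ 2 :=
    Summable.sum_le_tsum _ (fun j _ => by positivity) aux_hasSum84.summable
  calc α i ≤ 8 * (i : ℝ) - 6 + (32 / 3) * ∑ j ∈ Finset.range (i - 1), 1 / (8 * (j : ℝ) + 4) ^ 2 := h2
    _ ≤ 8 * (i : ℝ) - 6 + (32 / 3) * ∑' j : ℕ, 1 / (8 * (j : ℝ) + 4) ^ 2 := by linarith
    _ = 8 * (i : ℝ) - 6 + Real.pi ^ 2 / 12 := by rw [htsval]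
    _ < 8 * (i : ℝ) - 5 := by linarith
end
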